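/- Fix ℓ ∈ (0, 1) and τ ∈ (0, π/2). Then the curve (t, γ, θ)(τ) = (τ, γ(τ), θ(τ)) satisfies the null-worldline condition for the AdS₃ metric ds² = (1/sin²γ)(−dt² + dγ² + cos²γ dθ²): namely, (γ′(τ))² + cos²(γ(τ))·(θ′(τ))² = 1, where γ′ and θ′ are the derivatives of γ and θ at τ. -/

import Mathlib

open Real

/-- Tortoise coordinate `γ(τ)` along the null geodesic of angular momentum `ℓ`:
`γ(τ) = arctan(√(1−ℓ²)·tan τ / √(1+ℓ²·tan²τ))` for `τ ∈ [0, π/2)`, with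
`γ(π/2) = arctan(√(1−ℓ²)/ℓ)` if `ℓ > 0` and `π/2` if `ℓ = 0`, and
`γ(τ) = γ(π − τ)` for `τ ∈ (π/2, π]`. -/
noncomputable def tortoiseGamma (l τ : ℝ) : ℝ :=
  if τ < π / 2 then
    Real.arctan (Real.sqrt (1 - l ^ 2) * Real.tan τ /
      Real.sqrt (1 + l ^ 2 * Real.tan τ ^ 2))
  else if τ = π / 2 then
    (if 0 < l then Real.arctan (Real.sqrt (1 - l ^ 2) / l) else π / 2)
  else
    Real.arctan (Real.sqrt (1 - l ^ 2) * Real.tan (π - τ) /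
      Real.sqrt (1 + l ^ 2 * Real.tan (π - τ) ^ 2))

/-- Boundary angle `θ(τ)` along the null geodesic of angular momentum `ℓ`:
`θ(τ) = arctan(ℓ·tan τ)` for `τ ∈ [0, π/2)`, `θ(π/2) = π/2`, and
`θ(τ) = π − θ(π − τ)` for `τ ∈ (π/2, π]`. -/
noncomputable def boundaryTheta (l τ : ℝ) : ℝ :=
  if τ < π / 2 then Real.arctan (l * Real.tan τ)
  else if τ = π / 2 then π / 2
  else π - Real.arctan (l * Real.tan (π - τ))

/-- For `ℓ ∈ (0,1)` and `τ ∈ (0, π/2)`, the curve `(τ, γ(τ), θ(τ))` satisfies the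
null-worldline condition `(γ′(τ))² + cos²(γ(τ))·(θ′(τ))² = 1` for the AdS₃ metric
`ds² = (1/sin²γ)(−dt² + dγ² + cos²γ dθ²)`. -/
theorem null_worldline_condition (l τ : ℝ) (hl : l ∈ Set.Ioo (0 : ℝ) 1)
    (hτ : τ ∈ Set.Ioo 0 (π / 2)) :
    DifferentiableAt ℝ (tortoiseGamma l) τ ∧
    DifferentiableAt ℝ (boundaryTheta l) τ ∧
    (deriv (tortoiseGamma l) τ) ^ 2 +
        Real.cos (tortoiseGamma l τ) ^ 2 * (deriv (boundaryTheta l) τ) ^ 2 = 1 := by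
  obtain ⟨hl0, hl1⟩ := hl
  obtain ⟨hτ0, hτπ⟩ := hτ
  have hcos : Real.cos τ ≠ 0 :=
    (Real.cos_pos_of_mem_Ioo ⟨by linarith [Real.pi_pos], hτπ⟩).ne'
  set u := Real.tan τ with hu
  set L := Real.sqrt (1 - l ^ 2) with hL
  set S := Real.sqrt (1 + l ^ 2 * u ^ 2) with hS
  have hSsq : S ^ 2 = 1 + l ^ 2 * u ^ 2 := Real.sq_sqrt (by positivity)
  have hLsq : L ^ 2 = 1 - l ^ 2 := Real.sq_sqrt (by nlinarith)
  have hSpos : 0 < S := Real.sqrt_pos.mpr (by positivity)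
  have hc2 : (1 : ℝ) / Real.cos τ ^ 2 = 1 + u ^ 2 := by
    rw [hu, ← Real.inv_one_add_tan_sq hcos, one_div, inv_inv]
  have htan : HasDerivAt Real.tan (1 + u ^ 2) τ := by
    simpa [hc2] using Real.hasDerivAt_tan hcos
  -- γ branch
  have hden : HasDerivAt (fun x => Real.sqrt (1 + l ^ 2 * Real.tan x ^ 2))
      ((l ^ 2 * (2 * u ^ 1 * (1 + u ^ 2))) / (2 * S)) τ :=
    (((htan.pow 2).const_mul (l ^ 2)).const_add 1).sqrt (by rw [Pi.pow_apply]; positivity)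
  have hnum : HasDerivAt (fun x => L * Real.tan x) (L * (1 + u ^ 2)) τ :=
    htan.const_mul L
  have hquot : HasDerivAt
      (fun x => L * Real.tan x / Real.sqrt (1 + l ^ 2 * Real.tan x ^ 2))
      ((L * (1 + u ^ 2) * S - L * u * (l ^ 2 * (2 * u ^ 1 * (1 + u ^ 2)) / (2 * S))) / S ^ 2)
      τ := hnum.div hden hSpos.ne'
  have hγ0 : HasDerivAt
      (fun x => Real.arctan (L * Real.tan x / Real.sqrt (1 + l ^ 2 * Real.tan x ^ 2)))
      (1 / (1 + (L * u / S) ^ 2) *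
        ((L * (1 + u ^ 2) * S - L * u * (l ^ 2 * (2 * u ^ 1 * (1 + u ^ 2)) / (2 * S))) / S ^ 2))
      τ := hquot.arctan
  have hevγ : tortoiseGamma l =ᶠ[nhds τ]
      fun x => Real.arctan (L * Real.tan x / Real.sqrt (1 + l ^ 2 * Real.tan x ^ 2)) := by
    filter_upwards [Iio_mem_nhds hτπ] with x hx
    rw [tortoiseGamma, if_pos (Set.mem_Iio.mp hx), hL]
  have h2 : 1 + (L * u / S) ^ 2 = (1 + u ^ 2) / S ^ 2 := by
    rw [div_pow, mul_pow, hLsq, hSsq]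
    field_simp
    ring
  have hu2 : (0:ℝ) < 1 + u ^ 2 := by positivity
  have hγ : HasDerivAt (tortoiseGamma l) (L / S) τ := by
    have hkey : L * (1 + u ^ 2) * S - L * u * (l ^ 2 * (2 * u ^ 1 * (1 + u ^ 2)) / (2 * S))
        = L * (1 + u ^ 2) / S := by
      rw [pow_one]
      field_simp
      linear_combination L * hSsq
    have h1 : (1 : ℝ) / (1 + (L * u / S) ^ 2) *
        ((L * (1 + u ^ 2) * S - L * u * (l ^ 2 * (2 * u ^ 1 * (1 + u ^ 2)) / (2 * S))) / S ^ 2)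
        = L / S := by
      rw [hkey, h2]
      field_simp
    exact h1 ▸ (hγ0.congr_of_eventuallyEq hevγ)
  -- θ branch
  have hθ0 : HasDerivAt (fun x => Real.arctan (l * Real.tan x))
      (1 / (1 + (l * u) ^ 2) * (l * (1 + u ^ 2))) τ := (htan.const_mul l).arctan
  have hevθ : boundaryTheta l =ᶠ[nhds τ] fun x => Real.arctan (l * Real.tan x) := by
    filter_upwards [Iio_mem_nhds hτπ] with x hx
    rw [boundaryTheta, if_pos (Set.mem_Iio.mp hx)]
  have hθ : HasDerivAt (boundaryTheta l) (l * (1 + u ^ 2) / (1 + l ^ 2 * u ^ 2)) τ := by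
    have h1 : (1 : ℝ) / (1 + (l * u) ^ 2) * (l * (1 + u ^ 2))
        = l * (1 + u ^ 2) / (1 + l ^ 2 * u ^ 2) := by ring_nf
    exact h1 ▸ (hθ0.congr_of_eventuallyEq hevθ)
  refine ⟨hγ.differentiableAt, hθ.differentiableAt, ?_⟩
  rw [hγ.deriv, hθ.deriv]
  have hγval : tortoiseGamma l τ = Real.arctan (L * u / S) := by
    simp only [tortoiseGamma, if_pos hτπ, hL, hu, hS]
  rw [hγval, Real.cos_sq_arctan, h2, div_pow, hLsq, hSsq]
  have h3 : (0:ℝ) < 1 + l ^ 2 * u ^ 2 := by positivity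
  field_simp
  ring
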